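/- For a continuous function f : [0,1] → ℝ that is nonnegative, with f(1) > 0, the quotient (∫₀¹ x^(n+1) f(x) dx)/(∫₀¹ xⁿ f(x) dx) tends to 1 as n → ∞. -/
import Mathlib

theorem continuous_prior_ratio_tendsto_one (f : ℝ → ℝ)
    (hf : ContinuousOn f (Set.Icc 0 1))
    (hf0 : ∀ x ∈ Set.Icc (0:ℝ) 1, 0 ≤ f x) (hf1 : 0 < f 1) :
    Filter.Tendsto (fun n : ℕ =>
      (∫ x in (0:ℝ)..1, x ^ (n + 1) * f x) / (∫ x in (0:ℝ)..1, x ^ n * f x))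
      Filter.atTop (nhds 1) := by
  -- continuity neighborhood of 1 where f ≥ f 1 / 2
  have h1mem : (1:ℝ) ∈ Set.Icc (0:ℝ) 1 := by norm_num
  have hcw : Filter.Tendsto f (nhdsWithin 1 (Set.Icc 0 1)) (nhds (f 1)) := hf 1 h1mem
  have hmem : {x | f 1 / 2 < f x} ∈ nhdsWithin (1:ℝ) (Set.Icc 0 1) :=
    hcw (Ioi_mem_nhds (by linarith))
  rw [mem_nhdsWithin] at hmem
  obtain ⟨U, hUopen, hU1, hUsub⟩ := hmem
  obtain ⟨δ, hδ, hball⟩ := Metric.isOpen_iff.1 hUopen 1 hU1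
  set c₀ : ℝ := max (1 - δ/2) (1/2) with hc₀def
  have hc₀lt : c₀ < 1 := by
    apply max_lt <;> [linarith; norm_num]
  have hc₀half : (1/2:ℝ) ≤ c₀ := le_max_right _ _
  have hc₀pos : 0 < c₀ := by linarith
  have hfge : ∀ x ∈ Set.Icc c₀ 1, f 1 / 2 ≤ f x := by
    intro x hx
    have hx01 : x ∈ Set.Icc (0:ℝ) 1 := ⟨le_trans hc₀pos.le hx.1, hx.2⟩
    have hxl : 1 - δ/2 ≤ x := le_trans (le_max_left _ _) hx.1
    have hxU : x ∈ U := by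
      apply hball
      rw [Metric.mem_ball, Real.dist_eq, abs_lt]
      constructor <;> [linarith [hx.2]; linarith [hx.2]]
    exact (hUsub ⟨hxU, hx01⟩).le
  -- integrability
  have hgc : ∀ n : ℕ, ContinuousOn (fun x => x ^ n * f x) (Set.Icc 0 1) :=
    fun n => (continuous_pow n).continuousOn.mul hf
  have hgint : ∀ (n : ℕ) (a b : ℝ), a ∈ Set.Icc (0:ℝ) 1 → b ∈ Set.Icc (0:ℝ) 1 →
      IntervalIntegrable (fun x => x ^ n * f x) MeasureTheory.volume a b := by
    intro n a b ha hb
    exact ((hgc n).mono (Set.uIcc_subset_Icc ha hb)).intervalIntegrable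
  have hfint : ∀ (a b : ℝ), a ∈ Set.Icc (0:ℝ) 1 → b ∈ Set.Icc (0:ℝ) 1 →
      IntervalIntegrable f MeasureTheory.volume a b := by
    intro a b ha hb
    exact (hf.mono (Set.uIcc_subset_Icc ha hb)).intervalIntegrable
  -- generic lower bound for Iₙ
  have hIlbGen : ∀ t : ℝ, c₀ ≤ t → t < 1 → ∀ n : ℕ,
      (1 - t) * (f 1 / 2) * t ^ n ≤ ∫ x in (0:ℝ)..1, x ^ n * f x := by
    intro t ht0 ht1 n
    have htpos : 0 < t := lt_of_lt_of_le hc₀pos ht0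
    have htmem : t ∈ Set.Icc (0:ℝ) 1 := ⟨htpos.le, ht1.le⟩
    have hsplit : (∫ x in (0:ℝ)..t, x ^ n * f x) + (∫ x in t..1, x ^ n * f x)
        = ∫ x in (0:ℝ)..1, x ^ n * f x :=
      intervalIntegral.integral_add_adjacent_intervals (hgint n 0 t (by norm_num) htmem) (hgint n t 1 htmem h1mem)
    have h1 : 0 ≤ ∫ x in (0:ℝ)..t, x ^ n * f x := by
      apply intervalIntegral.integral_nonneg htpos.le
      intro u hu
      exact mul_nonneg (pow_nonneg hu.1 n) (hf0 u ⟨hu.1, le_trans hu.2 ht1.le⟩)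
    have h2 : (∫ _x in t..1, t ^ n * (f 1 / 2)) ≤ ∫ x in t..1, x ^ n * f x := by
      apply intervalIntegral.integral_mono_on ht1.le
        (intervalIntegrable_const) (hgint n t 1 htmem h1mem)
      intro x hx
      have hfx : f 1 / 2 ≤ f x := hfge x ⟨le_trans ht0 hx.1, hx.2⟩
      have hxn : t ^ n ≤ x ^ n := pow_le_pow_left₀ htpos.le hx.1 n
      have hx0 : (0:ℝ) ≤ x := le_trans htpos.le hx.1
      exact mul_le_mul hxn hfx (by linarith) (pow_nonneg hx0 n)
    rw [intervalIntegral.integral_const, smul_eq_mul] at h2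
    linarith [h2, h1, hsplit]
  -- positivity
  have hIpos : ∀ n : ℕ, 0 < ∫ x in (0:ℝ)..1, x ^ n * f x := by
    intro n
    have h := hIlbGen c₀ le_rfl hc₀lt n
    have hp : 0 < (1 - c₀) * (f 1 / 2) * c₀ ^ n :=
      mul_pos (mul_pos (by linarith) (by linarith)) (pow_pos hc₀pos n)
    linarith
  -- monotonicity: I_{n+1} ≤ Iₙ
  have hmono : ∀ n : ℕ, (∫ x in (0:ℝ)..1, x ^ (n+1) * f x) ≤ ∫ x in (0:ℝ)..1, x ^ n * f x := by
    intro n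
    apply intervalIntegral.integral_mono_on zero_le_one
      (hgint (n+1) 0 1 (by norm_num) h1mem) (hgint n 0 1 (by norm_num) h1mem)
    intro x hx
    exact mul_le_mul_of_nonneg_right
      (pow_le_pow_of_le_one hx.1 hx.2 (Nat.le_succ n)) (hf0 x hx)
  -- M and its positivity
  set M : ℝ := ∫ x in (0:ℝ)..1, f x with hMdef
  have hM : 0 < M := by
    have h := hIlbGen c₀ le_rfl hc₀lt 0
    simp only [pow_zero, one_mul, mul_one] at h
    nlinarith
  rw [tendsto_order]
  constructor
  · -- lower: ∀ l < 1, eventually l < ratio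
    intro l hl
    have hml : max l (1/2) < 1 := max_lt hl (by norm_num)
    set a : ℝ := (max l (1/2) + 1) / 2 with hadef
    have hla : l < a := by
      have := le_max_left l (1/2)
      simp only [hadef]; linarith
    have ha1 : a < 1 := by simp only [hadef]; linarith
    have ha0 : (0:ℝ) < a := by
      have := le_max_right l (1/2)
      simp only [hadef]; linarith
    have hamem : a ∈ Set.Icc (0:ℝ) 1 := ⟨ha0.le, ha1.le⟩
    have hmac : max a c₀ < 1 := max_lt ha1 hc₀lt
    set c : ℝ := (max a c₀ + 1) / 2 with hcdef
    have hac : a < c := by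
      have := le_max_left a c₀
      simp only [hcdef]; linarith
    have hcc₀ : c₀ ≤ c := by
      have := le_max_right a c₀
      simp only [hcdef]; linarith
    have hc1 : c < 1 := by simp only [hcdef]; linarith
    have hc0 : (0:ℝ) < c := lt_trans ha0 hac
    set K : ℝ := (1 - c) * (f 1 / 2) with hKdef
    have hK : 0 < K := by
      apply mul_pos <;> linarith
    -- eventual smallness of (a/c)^n
    have htend : Filter.Tendsto (fun n : ℕ => (a/c)^n) Filter.atTop (nhds 0) :=
      tendsto_pow_atTop_nhds_zero_of_lt_one (div_nonneg ha0.le hc0.le)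
        ((div_lt_one hc0).2 hac)
    have hev : ∀ᶠ n : ℕ in Filter.atTop, (a/c)^n < (a - l) * K / (a * M) :=
      htend.eventually_lt_const (div_pos (mul_pos (by linarith) hK) (mul_pos ha0 hM))
    filter_upwards [hev] with n hn
    rw [lt_div_iff₀ (hIpos n)]
    set In : ℝ := ∫ x in (0:ℝ)..1, x ^ n * f x with hIn
    -- main lower bound on I_{n+1}
    have hsplit1 : (∫ x in (0:ℝ)..a, x ^ (n+1) * f x) + (∫ x in a..1, x ^ (n+1) * f x)
        = ∫ x in (0:ℝ)..1, x ^ (n+1) * f x :=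
      intervalIntegral.integral_add_adjacent_intervals
        (hgint (n+1) 0 a (by norm_num) hamem) (hgint (n+1) a 1 hamem h1mem)
    have hsplit2 : (∫ x in (0:ℝ)..a, x ^ n * f x) + (∫ x in a..1, x ^ n * f x) = In :=
      intervalIntegral.integral_add_adjacent_intervals
        (hgint n 0 a (by norm_num) hamem) (hgint n a 1 hamem h1mem)
    have hpos1 : 0 ≤ ∫ x in (0:ℝ)..a, x ^ (n+1) * f x := by
      apply intervalIntegral.integral_nonneg ha0.le
      intro u hu
      exact mul_nonneg (pow_nonneg hu.1 _) (hf0 u ⟨hu.1, le_trans hu.2 ha1.le⟩)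
    have htail : (∫ x in a..1, a * (x ^ n * f x)) ≤ ∫ x in a..1, x ^ (n+1) * f x := by
      apply intervalIntegral.integral_mono_on ha1.le
        ((hgint n a 1 hamem h1mem).const_mul a) (hgint (n+1) a 1 hamem h1mem)
      intro x hx
      have hx0 : (0:ℝ) ≤ x := le_trans ha0.le hx.1
      have hfx : 0 ≤ f x := hf0 x ⟨hx0, hx.2⟩
      have : a * x ^ n ≤ x ^ (n+1) := by
        rw [pow_succ']
        exact mul_le_mul_of_nonneg_right hx.1 (pow_nonneg hx0 n)
      nlinarith [this, hfx]
    rw [intervalIntegral.integral_const_mul] at htail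
    -- head bound: ∫₀ᵃ xⁿ f ≤ aⁿ M
    have hhead : (∫ x in (0:ℝ)..a, x ^ n * f x) ≤ a ^ n * M := by
      have h1 : (∫ x in (0:ℝ)..a, x ^ n * f x) ≤ ∫ x in (0:ℝ)..a, a ^ n * f x := by
        apply intervalIntegral.integral_mono_on ha0.le
          (hgint n 0 a (by norm_num) hamem) ((hfint 0 a (by norm_num) hamem).const_mul _)
        intro x hx
        have hfx : 0 ≤ f x := hf0 x ⟨hx.1, le_trans hx.2 ha1.le⟩
        exact mul_le_mul_of_nonneg_right (pow_le_pow_left₀ hx.1 hx.2 n) hfx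
      rw [intervalIntegral.integral_const_mul] at h1
      have hsplitf : (∫ x in (0:ℝ)..a, f x) + (∫ x in a..1, f x) = M :=
        intervalIntegral.integral_add_adjacent_intervals
          (hfint 0 a (by norm_num) hamem) (hfint a 1 hamem h1mem)
      have hftail : 0 ≤ ∫ x in a..1, f x := by
        apply intervalIntegral.integral_nonneg ha1.le
        intro u hu
        exact hf0 u ⟨le_trans ha0.le hu.1, hu.2⟩
      have : (∫ x in (0:ℝ)..a, f x) ≤ M := by linarith
      linarith [h1, mul_le_mul_of_nonneg_left this (pow_nonneg ha0.le n)]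
    -- combine: I_{n+1} ≥ a * In - a * (aⁿ M)
    have hkey : a * In - a * (a ^ n * M) ≤ ∫ x in (0:ℝ)..1, x ^ (n+1) * f x := by
      have h2 : a * (∫ x in a..1, x ^ n * f x) ≤ ∫ x in a..1, x ^ (n+1) * f x := htail
      have h3 : In - a ^ n * M ≤ ∫ x in a..1, x ^ n * f x := by linarith [hhead, hsplit2]
      linarith [hpos1, hsplit1, h2, mul_le_mul_of_nonneg_left h3 ha0.le]
    have hIlb : K * c ^ n ≤ In := by
      have := hIlbGen c hcc₀ hc1 n
      simp only [hKdef]; linarith [this]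
    -- from hn derive a * M * a^n < (a - l) * (K * c^n)
    have h3 : a ^ n * (a * M) < (a - l) * K * c ^ n := by
      rw [div_pow, div_lt_div_iff₀ (pow_pos hc0 n) (by positivity)] at hn
      linarith [hn]
    linarith [hkey, h3, mul_le_mul_of_nonneg_left hIlb (by linarith : (0:ℝ) ≤ a - l)]
  · -- upper: ratio ≤ 1 < u
    intro u hu
    filter_upwards with n
    exact lt_of_le_of_lt ((div_le_one (hIpos n)).2 (hmono n)) hu
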